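/- Let γ ∈ (0,1), α > 0, and D ≥ α. For every x ∈ S^{n−1} with D ≤ LCD_{α,γ}(x) ≤ 2D, there exists p ∈ ℤⁿ with 0 < ‖p‖₂ ≤ 3D such that ‖x − p/‖p‖₂‖₂ ≤ 2α/D. In other words, the set 𝒫 = {p/‖p‖₂ : p ∈ ℤⁿ∖{0}, ‖p‖₂ ≤ 3D} is a (2α/D)-net in Euclidean norm of the level set S_D = {x ∈ S^{n−1} : D ≤ LCD_{α,γ}(x) ≤ 2D}. -/

import Mathlib

open MeasureTheory ProbabilityTheory Matrix
open scoped ENNReal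

noncomputable section

/-- The Euclidean norm of a finite real vector. -/
def euclNorm {m : ℕ} (v : Fin m → ℝ) : ℝ := Real.sqrt (∑ i, v i ^ 2)

/-- A vector of `Fin m → ℝ` regarded as an element of Euclidean space. -/
def toE {m : ℕ} (v : Fin m → ℝ) : EuclideanSpace ℝ (Fin m) :=
  (WithLp.equiv 2 (Fin m → ℝ)).symm v

/-- The smallest singular value of a square matrix:
`s_n(A) = inf_{‖x‖₂ = 1} ‖Ax‖₂`. -/
def smin {n : ℕ} (A : Matrix (Fin n) (Fin n) ℝ) : ℝ :=
  sInf {r | ∃ x : Fin n → ℝ, euclNorm x = 1 ∧ r = euclNorm (A.mulVec x)}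

/-- The singular values of an m×n matrix (m ≤ n intended): the square roots of the
eigenvalues of `A * Aᵀ`. -/
def svals {m n : ℕ} (A : Matrix (Fin m) (Fin n) ℝ) : Fin m → ℝ :=
  fun i => Real.sqrt ((Matrix.isHermitian_mul_conjTranspose_self A).eigenvalues i)

/-- The `K`-rank of an m×n matrix: the number of its singular values of size at least `K√n`. -/
def kRank {m n : ℕ} (K : ℝ) (A : Matrix (Fin m) (Fin n) ℝ) : ℕ :=
  (Finset.univ.filter (fun i => K * Real.sqrt n ≤ svals A i)).card

/-- The operator (spectral) norm of a matrix, via Euclidean spaces. -/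
def specNorm {m n : ℕ} (A : Matrix (Fin m) (Fin n) ℝ) : ℝ :=
  ‖LinearMap.toContinuousLinearMap (Matrix.toEuclideanLin A)‖

/-- The Hilbert–Schmidt (Frobenius) norm of a matrix. -/
def frobNorm {m n : ℕ} (A : Matrix (Fin m) (Fin n) ℝ) : ℝ :=
  Real.sqrt (∑ i, ∑ j, A i j ^ 2)

/-- The least common denominator `LCD_{α,γ}(v)`. -/
def LCD {N : ℕ} (α γ : ℝ) (v : Fin N → ℝ) : ℝ :=
  sInf {θ : ℝ | 0 < θ ∧ ∃ p : Fin N → ℤ,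
    euclNorm (θ • v - fun i => (p i : ℝ)) < min (γ * euclNorm (θ • v)) α}

/-- A vector is `δ`-sparse if it has at most `δN` nonzero coordinates. -/
def IsSparse {N : ℕ} (δ : ℝ) (x : Fin N → ℝ) : Prop :=
  ((Finset.univ.filter (fun i => x i ≠ 0)).card : ℝ) ≤ δ * N

/-- Compressible unit vectors: within distance `ρ` of a `δ`-sparse vector. -/
def Comp {N : ℕ} (δ ρ : ℝ) (x : Fin N → ℝ) : Prop :=
  euclNorm x = 1 ∧ ∃ y : Fin N → ℝ, IsSparse δ y ∧ euclNorm (x - y) ≤ ρ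

/-- Incompressible unit vectors. -/
def Incomp {N : ℕ} (δ ρ : ℝ) (x : Fin N → ℝ) : Prop :=
  euclNorm x = 1 ∧ ¬ Comp δ ρ x

/-- A real random variable is lazy Rademacher if it takes the value 0 with probability 1/2
and the values 1 and -1 with probability 1/4 each. -/
def IsLazyRademacher {Ω : Type*} [MeasurableSpace Ω] (μ : Measure Ω) (X : Ω → ℝ) : Prop :=
  Measurable X ∧ μ {ω | X ω = 0} = 1/2 ∧ μ {ω | X ω = 1} = 1/4 ∧ μ {ω | X ω = -1} = 1/4

/-- `X` has sub-Gaussian norm at most `s`, i.e. `E[exp(X²/s²)] ≤ 2`. -/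
def HasSubgaussianNormLE {Ω : Type*} [MeasurableSpace Ω] (μ : Measure Ω) (X : Ω → ℝ)
    (s : ℝ) : Prop :=
  Integrable (fun ω => Real.exp (X ω ^ 2 / s ^ 2)) μ ∧
    (∫ ω, Real.exp (X ω ^ 2 / s ^ 2) ∂μ) ≤ 2

/-- The entries of the random matrix `M` are i.i.d. copies of `ξ`. -/
def IIDEntries {Ω : Type*} [MeasurableSpace Ω] (μ : Measure Ω) {m n : ℕ}
    (M : Ω → Matrix (Fin m) (Fin n) ℝ) (ξ : Ω → ℝ) : Prop :=
  iIndepFun (fun (p : Fin m × Fin n) ω => M ω p.1 p.2) μ ∧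
    ∀ i j, IdentDistrib (fun ω => M ω i j) ξ μ μ

/-- The (n−1)×n matrix consisting of the first n−1 rows of an n×n matrix. -/
def firstRows {n : ℕ} (A : Matrix (Fin n) (Fin n) ℝ) : Matrix (Fin (n-1)) (Fin n) ℝ :=
  Matrix.submatrix A (Fin.castLE (Nat.sub_le n 1)) id

end

/-- The Borel/pi measurable structure on matrices (entrywise). -/
noncomputable instance matrixMeasurableSpace {m n α : Type*} [MeasurableSpace α] :
    MeasurableSpace (Matrix m n α) :=
  inferInstanceAs (MeasurableSpace (m → n → α))

lemma euclNorm_eq_norm_toE {m : ℕ} (v : Fin m → ℝ) : euclNorm v = ‖toE v‖ := by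
  rw [EuclideanSpace.norm_eq]
  simp [euclNorm, toE, Real.norm_eq_abs, sq_abs]

/-- normalized integer points of norm at most `3D` form a `(2α/D)`-net of the
level set `S_D` of the LCD. -/
theorem net_of_lcd_level_set {n : ℕ} (γ α D : ℝ) (hγ : γ ∈ Set.Ioo (0:ℝ) 1) (hα : 0 < α)
    (hD : α ≤ D) (x : Fin n → ℝ) (hx : euclNorm x = 1)
    (h1 : D ≤ LCD α γ x) (h2 : LCD α γ x ≤ 2 * D) :
    ∃ p : Fin n → ℤ, 0 < euclNorm (fun i => (p i : ℝ)) ∧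
      euclNorm (fun i => (p i : ℝ)) ≤ 3 * D ∧
      euclNorm (x - (euclNorm (fun i => (p i : ℝ)))⁻¹ • (fun i => (p i : ℝ))) ≤ 2 * α / D := by
  have hD0 : 0 < D := lt_of_lt_of_le hα hD
  set S : Set ℝ := {θ : ℝ | 0 < θ ∧ ∃ p : Fin n → ℤ,
    euclNorm (θ • x - fun i => (p i : ℝ)) < min (γ * euclNorm (θ • x)) α} with hSdef
  have hLCD : LCD α γ x = sInf S := rfl
  have hSne : S.Nonempty := by
    by_contra h
    rw [Set.not_nonempty_iff_eq_empty] at h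
    rw [hLCD, h, Real.sInf_empty] at h1
    linarith
  have hSbdd : BddBelow S := ⟨0, fun θ hθ => le_of_lt hθ.1⟩
  have hfloor : (9 * D ^ 2 : ℝ) < (⌊(9 * D ^ 2 : ℝ)⌋ : ℝ) + 1 := Int.lt_floor_add_one _
  set c : ℝ := ((⌊(9 * D ^ 2 : ℝ)⌋ : ℝ) + 1) - 9 * D ^ 2 with hcdef
  have hc0 : 0 < c := by simp only [hcdef]; linarith
  set ε : ℝ := min 1 (c / (6 * D + 1)) with hεdef
  have hε0 : 0 < ε := lt_min one_pos (div_pos hc0 (by linarith))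
  have hε1 : ε ≤ 1 := min_le_left _ _
  have hε2 : ε ≤ c / (6 * D + 1) := min_le_right _ _
  obtain ⟨θ, hθS, hθlt⟩ := Real.lt_sInf_add_pos hSne hε0
  have hθge : D ≤ θ := le_trans h1 (by rw [hLCD]; exact csInf_le hSbdd hθS)
  have hθ0 : 0 < θ := lt_of_lt_of_le hD0 hθge
  obtain ⟨-, p, hp⟩ := hθS
  have hθ2D : θ < 2 * D + ε := by
    rw [hLCD] at h2; linarith
  refine ⟨p, ?_⟩
  set X : EuclideanSpace ℝ (Fin n) := toE x with hXdef
  set P : EuclideanSpace ℝ (Fin n) := toE (fun i => (p i : ℝ)) with hPdef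
  have hXnorm : ‖X‖ = 1 := by rw [← euclNorm_eq_norm_toE]; exact hx
  have hE : euclNorm (fun i => (p i : ℝ)) = ‖P‖ := euclNorm_eq_norm_toE _
  have hθX : ‖θ • X‖ = θ := by
    rw [norm_smul, hXnorm, Real.norm_eq_abs, abs_of_pos hθ0, mul_one]
  have hpa : ‖θ • X - P‖ < α := by
    have h := lt_of_lt_of_le hp (min_le_right _ _)
    rw [euclNorm_eq_norm_toE] at h
    exact h
  have hPsq : ‖P‖ ^ 2 = ((∑ i, (p i) ^ 2 : ℤ) : ℝ) := by
    rw [EuclideanSpace.norm_eq, Real.sq_sqrt (by positivity)]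
    have hPi : ∀ i, P i = (p i : ℝ) := fun i => rfl
    push_cast
    simp [hPi, Real.norm_eq_abs, sq_abs]
  have hgoal : euclNorm (x - (‖P‖)⁻¹ • (fun i => (p i : ℝ))) = ‖X - (‖P‖)⁻¹ • P‖ := by
    rw [euclNorm_eq_norm_toE]; rfl
  clear_value X P S c ε
  clear hp hSdef hLCD hSne hSbdd hXdef hPdef
  have hN_gt : θ - α < ‖P‖ := by
    have h := norm_sub_norm_le (θ • X) P
    rw [hθX] at h
    linarith
  have hN_pos : 0 < ‖P‖ := lt_of_le_of_lt (by linarith) hN_gt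
  have hN_lt : ‖P‖ < θ + α := by
    have h := norm_sub_norm_le P (θ • X)
    rw [hθX, norm_sub_rev] at h
    linarith
  have hPsq_lt : ‖P‖ ^ 2 < (⌊(9 * D ^ 2 : ℝ)⌋ : ℝ) + 1 := by
    have h3 : ‖P‖ < 3 * D + ε := by linarith
    have h4 : ‖P‖ ^ 2 < (3 * D + ε) ^ 2 := by nlinarith
    have h5 : (3 * D + ε) ^ 2 ≤ 9 * D ^ 2 + ε * (6 * D + 1) := by nlinarith
    have h6 : ε * (6 * D + 1) ≤ c := by
      rw [le_div_iff₀ (by linarith : (0:ℝ) < 6 * D + 1)] at hε2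
      exact hε2
    simp only [hcdef] at h6
    linarith
  have hPsq_le : ‖P‖ ^ 2 ≤ 9 * D ^ 2 := by
    have hint : ((∑ i, (p i) ^ 2 : ℤ) : ℝ) < (⌊(9 * D ^ 2 : ℝ)⌋ : ℝ) + 1 := by
      rw [← hPsq]; exact hPsq_lt
    have : (∑ i, (p i) ^ 2 : ℤ) ≤ ⌊(9 * D ^ 2 : ℝ)⌋ := by exact_mod_cast Int.lt_add_one_iff.mp (by exact_mod_cast hint)
    rw [hPsq]
    calc ((∑ i, (p i) ^ 2 : ℤ) : ℝ) ≤ (⌊(9 * D ^ 2 : ℝ)⌋ : ℝ) := by exact_mod_cast this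
      _ ≤ 9 * D ^ 2 := Int.floor_le _
  have hNle : ‖P‖ ≤ 3 * D := by
    have h9 : ‖P‖ ^ 2 ≤ (3 * D) ^ 2 := by
      rw [show (3 * D) ^ 2 = 9 * D ^ 2 by ring]; exact hPsq_le
    have h10 := Real.sqrt_le_sqrt h9
    rwa [Real.sqrt_sq hN_pos.le, Real.sqrt_sq (by linarith : (0:ℝ) ≤ 3 * D)] at h10
  refine ⟨by rw [hE]; exact hN_pos, by rw [hE]; exact hNle, ?_⟩
  rw [hE, hgoal]
  have key : X - (‖P‖)⁻¹ • P = θ⁻¹ • (θ • X - P) + (θ⁻¹ - (‖P‖)⁻¹) • P := by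
    rw [smul_sub, sub_smul, smul_smul, inv_mul_cancel₀ hθ0.ne', one_smul]
    abel
  rw [key]
  have hterm1 : ‖θ⁻¹ • (θ • X - P)‖ ≤ α / θ := by
    rw [norm_smul, Real.norm_eq_abs, abs_of_pos (inv_pos.mpr hθ0), div_eq_inv_mul]
    exact mul_le_mul_of_nonneg_left hpa.le (inv_pos.mpr hθ0).le
  have hterm2 : ‖(θ⁻¹ - (‖P‖)⁻¹) • P‖ ≤ α / θ := by
    rw [norm_smul, Real.norm_eq_abs]
    have heq : (θ⁻¹ - (‖P‖)⁻¹) = (‖P‖ - θ) / (θ * ‖P‖) := by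
      field_simp
    rw [heq, abs_div, abs_of_pos (mul_pos hθ0 hN_pos)]
    have habs : |‖P‖ - θ| ≤ α := abs_le.mpr ⟨by linarith, by linarith⟩
    rw [div_mul_eq_mul_div, div_le_div_iff₀ (mul_pos hθ0 hN_pos) hθ0]
    have hmul := mul_le_mul_of_nonneg_right habs (mul_pos hN_pos hθ0).le
    calc |‖P‖ - θ| * ‖P‖ * θ = |‖P‖ - θ| * (‖P‖ * θ) := by ring
      _ ≤ α * (‖P‖ * θ) := hmul
      _ = α * (θ * ‖P‖) := by ring
  calc ‖θ⁻¹ • (θ • X - P) + (θ⁻¹ - (‖P‖)⁻¹) • P‖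
      ≤ ‖θ⁻¹ • (θ • X - P)‖ + ‖(θ⁻¹ - (‖P‖)⁻¹) • P‖ := norm_add_le _ _
    _ ≤ α / θ + α / θ := add_le_add hterm1 hterm2
    _ = 2 * α / θ := by ring
    _ ≤ 2 * α / D := by
        apply div_le_div_of_nonneg_left (by linarith) hD0 hθge
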